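/- arXiv:2305.09145 — 4 statements merged into one kernel-verified Lean document; each statement's English description precedes it below -/
import Mathlib

section
/- Let A be an arrangement of hyperplanes in an n-dimensional real vector space. Then the number of regions of A equals the sum over all central subarrangements B ⊆ A of (-1)^{|B| - rank(B)}, where rank(B) is the dimension of the span of the normal vectors of the hyperplanes in B. -/
open scoped Classical

set_option synthInstance.maxHeartbeats 1000000
set_option maxHeartbeats 2000000


-- kernel of the restriction map on functionals
lemma zas_ker_lcomp {V : Type} [AddCommGroup V] [Module ℝ V] (φfj : V →ₗ[ℝ] ℝ)
    (u : V) (hu : φfj u ≠ 0) :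
    LinearMap.ker (LinearMap.lcomp ℝ ℝ (LinearMap.ker φfj).subtype) = (ℝ ∙ φfj) := by
  ext φ
  simp only [LinearMap.mem_ker, Submodule.mem_span_singleton]
  constructor
  · intro hφ
    have hvan : ∀ w ∈ LinearMap.ker φfj, φ w = 0 := by
      intro w hw
      have := LinearMap.ext_iff.1 hφ ⟨w, hw⟩
      simpa using this
    refine ⟨φ u * (φfj u)⁻¹, ?_⟩
    ext x
    have hmem : x - (φfj x * (φfj u)⁻¹) • u ∈ LinearMap.ker φfj := by
      simp only [LinearMap.mem_ker, map_sub, map_smul, smul_eq_mul]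
      field_simp
      simp
    have h0 := hvan _ hmem
    simp only [map_sub, map_smul, smul_eq_mul, sub_eq_zero] at h0
    simp only [LinearMap.smul_apply, smul_eq_mul]
    rw [h0]; ring
  · rintro ⟨c, rfl⟩
    ext w
    simp [LinearMap.lcomp_apply]

lemma zas_rank_restrict {m : ℕ} {V : Type} [AddCommGroup V] [Module ℝ V]
    (f : Fin m → V →ₗ[ℝ] ℝ) {j : Fin m} (u : V) (hu : f j u ≠ 0)
    (B : Finset (Fin m)) (hjB : j ∉ B) :
    Module.finrank ℝ (Submodule.span ℝ
        ((fun i => (f i).comp (LinearMap.ker (f j)).subtype) '' ↑B)) + 1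
      = Module.finrank ℝ (Submodule.span ℝ (f '' ↑(insert j B))) := by
  classical
  set W := LinearMap.ker (f j) with hW
  set D : (V →ₗ[ℝ] ℝ) →ₗ[ℝ] (W →ₗ[ℝ] ℝ) := LinearMap.lcomp ℝ ℝ W.subtype with hD
  have hfj : f j ≠ 0 := fun h => hu (by simp [h])
  set P := Submodule.span ℝ (f '' ↑(insert j B)) with hP
  have hfin : (f '' ↑(insert j B)).Finite := ((insert j B).finite_toSet).image f
  haveI : FiniteDimensional ℝ P := FiniteDimensional.span_of_finite ℝ hfin
  -- image of P under D is the span of restricted functionals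
  have hD0 : D (f j) = 0 := by
    ext w
    have h2 := w.2
    simp only [W, LinearMap.mem_ker] at h2
    simpa [D] using h2
  have himg : Submodule.map D P = Submodule.span ℝ
      ((fun i => (f i).comp W.subtype) '' ↑B) := by
    rw [hP, Submodule.map_span, Finset.coe_insert, Set.image_insert_eq, Set.image_insert_eq,
      hD0, Submodule.span_insert_zero, Set.image_image]
    rfl
  -- f j belongs to P
  have hfjP : (ℝ ∙ f j) ≤ P := by
    rw [Submodule.span_singleton_le_iff_mem]
    exact Submodule.subset_span ⟨j, by simp, rfl⟩
  -- rank-nullity for D restricted to P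
  have hrn := LinearMap.finrank_range_add_finrank_ker (K := ℝ) (V := P) (V₂ := W →ₗ[ℝ] ℝ) (D.domRestrict P)
  have hrange : LinearMap.range (D.domRestrict P) = Submodule.map D P := by
    simp [LinearMap.range_domRestrict]
  have hker : LinearMap.ker (D.domRestrict P) = Submodule.comap P.subtype (ℝ ∙ f j) := by
    rw [LinearMap.ker_domRestrict, zas_ker_lcomp (f j) u hu]
  have hkerrank : Module.finrank ℝ (LinearMap.ker (D.domRestrict P)) = 1 := by
    rw [hker]
    rw [LinearEquiv.finrank_eq (Submodule.comapSubtypeEquivOfLe hfjP)]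
    exact finrank_span_singleton hfj
  rw [hrange, hkerrank, himg] at hrn
  rw [hrn, hP]

-- perturbation lemma
lemma zas_perturb {m : ℕ} {V : Type} [AddCommGroup V] [Module ℝ V] {t : Finset (Fin m)}
    {f : Fin m → V →ₗ[ℝ] ℝ} {b : Fin m → ℝ} {σ : Fin m → Bool} {x : V} (v : V)
    (hx : ∀ i ∈ t, if σ i then b i < f i x else f i x < b i) :
    ∃ ε : ℝ, 0 < ε ∧ ∀ δ : ℝ, |δ| < ε → ∀ i ∈ t,
      if σ i then b i < f i (x + δ • v) else f i (x + δ • v) < b i := by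
  have hopen : IsOpen (⋂ i ∈ t, {δ : ℝ |
      if σ i then b i < f i (x + δ • v) else f i (x + δ • v) < b i}) := by
    refine isOpen_biInter_finset fun i _ => ?_
    have hset : {δ : ℝ | if σ i then b i < f i (x + δ • v) else f i (x + δ • v) < b i}
        = (fun δ : ℝ => f i x + δ * f i v) ⁻¹' (if σ i then Set.Ioi (b i) else Set.Iio (b i)) := by
      ext δ
      by_cases h : σ i <;> simp [h, map_add, map_smul, smul_eq_mul]
    rw [hset]
    have hc : Continuous (fun δ : ℝ => f i x + δ * f i v) := by continuity
    exact hc.isOpen_preimage _ (by split <;> [exact isOpen_Ioi; exact isOpen_Iio])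
  have h0 : (0 : ℝ) ∈ ⋂ i ∈ t, {δ : ℝ |
      if σ i then b i < f i (x + δ • v) else f i (x + δ • v) < b i} := by
    refine Set.mem_iInter₂.2 fun i hi => ?_
    simpa using hx i hi
  obtain ⟨ε, hε, hball⟩ := Metric.isOpen_iff.1 hopen 0 h0
  refine ⟨ε, hε, fun δ hδ i hi => ?_⟩
  have : δ ∈ Metric.ball (0:ℝ) ε := by simpa [Real.dist_eq] using hδ
  exact Set.mem_iInter₂.1 (hball this) i hi

-- rank is at most card
lemma zas_rank_le {m : ℕ} {V : Type} [AddCommGroup V] [Module ℝ V]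
    (f : Fin m → V →ₗ[ℝ] ℝ) (C : Finset (Fin m)) :
    Module.finrank ℝ (Submodule.span ℝ (f '' ↑C)) ≤ C.card := by
  have h : f '' ↑C = ↑(C.image f) := (Finset.coe_image).symm
  rw [h]
  exact le_trans (finrank_span_finset_le_card _) Finset.card_image_le

theorem zas_core {m : ℕ} (s : Finset (Fin m)) :
    ∀ (V : Type) [AddCommGroup V] [Module ℝ V], ∀ (f : Fin m → V →ₗ[ℝ] ℝ) (b : Fin m → ℝ),
    ((Finset.univ.filter (fun σ : Fin m → Bool =>
        (∀ i ∉ s, σ i = false) ∧ ∃ x : V, ∀ i ∈ s,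
          if σ i then b i < f i x else f i x < b i)).card : ℤ) =
      ∑ B ∈ s.powerset.filter (fun B => ∃ x : V, ∀ i ∈ B, f i x = b i),
        (-1 : ℤ) ^ (B.card - Module.finrank ℝ (Submodule.span ℝ (f '' ↑B))) := by
  induction s using Finset.induction_on with
  | empty =>
    intro V _ _ f b
    have h1 : (Finset.univ.filter (fun σ : Fin m → Bool =>
        (∀ i ∉ (∅ : Finset (Fin m)), σ i = false) ∧ ∃ x : V, ∀ i ∈ (∅ : Finset (Fin m)),
          if σ i then b i < f i x else f i x < b i)) = {fun _ => false} := by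
      ext σ
      simp only [Finset.mem_filter, Finset.mem_univ, true_and, Finset.notMem_empty,
        Finset.mem_singleton]
      constructor
      · rintro ⟨h, -⟩
        funext i
        exact h i (by simp)
      · rintro rfl
        exact ⟨fun i _ => rfl, 0, fun i hi => by simp at hi⟩
    rw [h1, Finset.card_singleton, Finset.powerset_empty]
    have h2 : ({∅} : Finset (Finset (Fin m))).filter (fun B => ∃ x : V, ∀ i ∈ B, f i x = b i)
        = {∅} := by
      rw [Finset.filter_singleton, if_pos ⟨0, fun i hi => absurd hi (Finset.notMem_empty i)⟩]
    rw [h2, Finset.sum_singleton]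
    simp
  | @insert j t hj ih =>
    intro V _ _ f b
    by_cases hfj0 : f j = 0
    · by_cases hbj : b j = 0
      · -- f j = 0, b j = 0 : no regions, sum vanishes by involution
        have hL : (Finset.univ.filter (fun σ : Fin m → Bool =>
            (∀ i ∉ insert j t, σ i = false) ∧ ∃ x : V, ∀ i ∈ insert j t,
              if σ i then b i < f i x else f i x < b i)) = ∅ := by
          rw [Finset.filter_eq_empty_iff]
          rintro σ - ⟨-, x, hx⟩
          have hcon := hx j (Finset.mem_insert_self j t)
          rw [hfj0] at hcon
          simp only [LinearMap.zero_apply, hbj] at hcon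
          split at hcon <;> exact lt_irrefl 0 hcon
        rw [hL]
        have pair : ∀ C : Finset (Fin m), j ∉ C →
            ((-1 : ℤ) ^ ((insert j C).card -
                Module.finrank ℝ (Submodule.span ℝ (f '' ↑(insert j C))))
              = -(-1 : ℤ) ^ (C.card - Module.finrank ℝ (Submodule.span ℝ (f '' ↑C)))) := by
          intro C hjC
          have hspan : Submodule.span ℝ (f '' ↑(insert j C)) =
              Submodule.span ℝ (f '' ↑C) := by
            rw [Finset.coe_insert, Set.image_insert_eq, hfj0, Submodule.span_insert_zero]
          rw [hspan, Finset.card_insert_of_notMem hjC,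
            Nat.succ_sub (zas_rank_le f C), pow_succ]
          ring
        have cent_iff : ∀ C : Finset (Fin m), j ∉ C →
            ((∃ x : V, ∀ i ∈ insert j C, f i x = b i) ↔ (∃ x : V, ∀ i ∈ C, f i x = b i)) := by
          intro C hjC
          constructor
          · rintro ⟨x, hx⟩; exact ⟨x, fun i hi => hx i (Finset.mem_insert_of_mem hi)⟩
          · rintro ⟨x, hx⟩
            refine ⟨x, fun i hi => ?_⟩
            rcases Finset.mem_insert.1 hi with rfl | hi'
            · rw [hfj0, hbj]; rfl
            · exact hx i hi'
        simp only [Finset.card_empty, Nat.cast_zero]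
        symm
        refine Finset.sum_involution
          (fun B _ => if j ∈ B then B.erase j else insert j B) ?_ ?_ ?_ ?_
        · intro B hB
          by_cases hjB : j ∈ B
          · obtain ⟨C, hC1, hC2⟩ : ∃ C, B = insert j C ∧ j ∉ C :=
              ⟨B.erase j, (Finset.insert_erase hjB).symm, Finset.notMem_erase j B⟩
            subst hC1
            beta_reduce
            rw [if_pos (Finset.mem_insert_self j C), Finset.erase_insert hC2, pair C hC2]
            ring
          · beta_reduce
            rw [if_neg hjB, pair B hjB]
            ring
        · intro B hB hne
          beta_reduce
          by_cases hjB : j ∈ B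
          · rw [if_pos hjB]
            intro h
            exact (Finset.notMem_erase j B) (h.symm ▸ hjB)
          · rw [if_neg hjB]
            intro h
            exact hjB (h ▸ Finset.mem_insert_self j B)
        · intro B hB
          beta_reduce
          rw [Finset.mem_filter, Finset.mem_powerset] at hB ⊢
          obtain ⟨hsub, hcent⟩ := hB
          by_cases hjB : j ∈ B
          · simp only [if_pos hjB]
            refine ⟨(Finset.erase_subset j B).trans hsub, ?_⟩
            obtain ⟨x, hx⟩ := hcent
            exact ⟨x, fun i hi => hx i (Finset.mem_of_mem_erase hi)⟩
          · simp only [if_neg hjB]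
            refine ⟨Finset.insert_subset_insert j ((Finset.subset_insert_iff_of_notMem hjB).1 hsub), ?_⟩
            exact (cent_iff B hjB).2 hcent
        · intro B hB
          beta_reduce
          by_cases hjB : j ∈ B
          · rw [if_pos hjB, if_neg (Finset.notMem_erase j B), Finset.insert_erase hjB]
          · rw [if_neg hjB, if_pos (Finset.mem_insert_self j B), Finset.erase_insert hjB]
      · -- f j = 0, b j ≠ 0 : hyperplane empty, both sides unchanged
        have hb0 : (0:ℝ) < b j ∨ b j < 0 := by
          rcases lt_trichotomy (b j) 0 with h | h | h
          · exact Or.inr h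
          · exact absurd h hbj
          · exact Or.inl h
        have hcard : (Finset.univ.filter (fun σ : Fin m → Bool =>
            (∀ i ∉ insert j t, σ i = false) ∧ ∃ x : V, ∀ i ∈ insert j t,
              if σ i then b i < f i x else f i x < b i)).card =
            (Finset.univ.filter (fun σ : Fin m → Bool =>
            (∀ i ∉ t, σ i = false) ∧ ∃ x : V, ∀ i ∈ t,
              if σ i then b i < f i x else f i x < b i)).card := by
          refine Finset.card_nbij' (fun σ => Function.update σ j false)
            (fun τ => Function.update τ j (decide (b j < 0))) ?_ ?_ ?_ ?_
          · intro σ hσ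
            beta_reduce
            rw [Finset.mem_coe, Finset.mem_filter] at hσ ⊢
            obtain ⟨-, hoff, x, hx⟩ := hσ
            refine ⟨Finset.mem_univ _, fun i hi => ?_, x, fun i hi => ?_⟩
            · by_cases hij : i = j
              · subst hij; simp [Function.update_self]
              · rw [Function.update_of_ne hij]
                exact hoff i (by simp [Finset.mem_insert, hij, hi])
            · have hij : i ≠ j := fun h => hj (h ▸ hi)
              rw [Function.update_of_ne hij]
              exact hx i (Finset.mem_insert_of_mem hi)
          · intro τ hτ
            beta_reduce
            rw [Finset.mem_coe, Finset.mem_filter] at hτ ⊢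
            obtain ⟨-, hoff, x, hx⟩ := hτ
            refine ⟨Finset.mem_univ _, fun i hi => ?_, x, fun i hi => ?_⟩
            · have hij : i ≠ j := fun h => hi (h ▸ Finset.mem_insert_self j t)
              rw [Function.update_of_ne hij]
              exact hoff i (fun h => hi (Finset.mem_insert_of_mem h))
            · rcases Finset.mem_insert.1 hi with rfl | hi'
              · rw [Function.update_self, hfj0]
                by_cases h0 : b i < 0
                · rw [if_pos (by simpa using h0)]
                  simpa using h0
                · rw [if_neg (by simpa using h0)]
                  simpa using lt_of_le_of_ne (not_lt.1 h0) (Ne.symm hbj)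
              · have hij : i ≠ j := fun h => hj (h ▸ hi')
                rw [Function.update_of_ne hij]
                exact hx i hi'
          · intro σ hσ
            beta_reduce
            rw [Finset.mem_coe, Finset.mem_filter] at hσ
            obtain ⟨-, hoff, x, hx⟩ := hσ
            funext i
            by_cases hij : i = j
            · subst hij
              rw [Function.update_self]
              have hcon := hx i (Finset.mem_insert_self i t)
              rw [hfj0] at hcon
              simp only [LinearMap.zero_apply] at hcon
              cases hσi : σ i with
              | true =>
                  rw [hσi, if_pos rfl] at hcon
                  simp [hcon]
              | false =>
                  rw [hσi] at hcon
                  simp only [Bool.false_eq_true, if_false] at hcon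
                  simp [not_lt.2 hcon.le]
            · rw [Function.update_of_ne hij, Function.update_of_ne hij]
          · intro τ hτ
            beta_reduce
            rw [Finset.mem_coe, Finset.mem_filter] at hτ
            obtain ⟨-, hoff, -⟩ := hτ
            funext i
            by_cases hij : i = j
            · subst hij
              rw [Function.update_self]
              exact (hoff i hj).symm
            · rw [Function.update_of_ne hij, Function.update_of_ne hij]
        have hfil : (insert j t).powerset.filter (fun B => ∃ x : V, ∀ i ∈ B, f i x = b i)
            = t.powerset.filter (fun B => ∃ x : V, ∀ i ∈ B, f i x = b i) := by
          ext B
          rw [Finset.mem_filter, Finset.mem_filter, Finset.mem_powerset, Finset.mem_powerset]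
          constructor
          · rintro ⟨hsub, x, hx⟩
            have hjB : j ∉ B := by
              intro hjB
              have := hx j hjB
              rw [hfj0] at this
              exact hbj (by simpa using this.symm)
            exact ⟨(Finset.subset_insert_iff_of_notMem hjB).1 hsub, x, hx⟩
          · rintro ⟨hsub, hc⟩
            exact ⟨hsub.trans (Finset.subset_insert j t), hc⟩
        rw [hcard, hfil]
        exact ih V f b
    · -- main case : f j ≠ 0
      obtain ⟨u, hu⟩ : ∃ u, f j u ≠ 0 := by
        by_contra h
        push_neg at h
        exact hfj0 (LinearMap.ext fun x => by simpa using h x)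
      set v : V := (f j u)⁻¹ • u with hv
      have hfv : f j v = 1 := by
        rw [hv, map_smul, smul_eq_mul, inv_mul_cancel₀ hu]
      set x0 : V := (b j * (f j u)⁻¹) • u with hx0def
      have hx0 : f j x0 = b j := by
        rw [hx0def, map_smul, smul_eq_mul]
        field_simp
      set W := LinearMap.ker (f j) with hW
      set g : Fin m → (↥W →ₗ[ℝ] ℝ) := fun i => (f i).comp W.subtype with hg
      set c : Fin m → ℝ := fun i => b i - f i x0 with hc
      have hgval : ∀ (i : Fin m) (w : ↥W), g i w = f i w.1 := fun i w => rfl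
      have hwker : ∀ w : ↥W, f j w.1 = 0 := fun w => w.2
      set Ppos : (Fin m → Bool) → Prop := fun τ => ∃ x : V,
          (∀ i ∈ t, if τ i then b i < f i x else f i x < b i) ∧ b j < f j x with hPpos
      set Pneg : (Fin m → Bool) → Prop := fun τ => ∃ x : V,
          (∀ i ∈ t, if τ i then b i < f i x else f i x < b i) ∧ f j x < b j with hPneg
      set Meet : (Fin m → Bool) → Prop := fun τ => ∃ x : V,
          (∀ i ∈ t, if τ i then b i < f i x else f i x < b i) ∧ f j x = b j with hMeet
      set FeasIns := Finset.univ.filter (fun σ : Fin m → Bool =>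
          (∀ i ∉ insert j t, σ i = false) ∧ ∃ x : V, ∀ i ∈ insert j t,
            if σ i then b i < f i x else f i x < b i) with hFeasIns
      set FeasT := Finset.univ.filter (fun σ : Fin m → Bool =>
          (∀ i ∉ t, σ i = false) ∧ ∃ x : V, ∀ i ∈ t,
            if σ i then b i < f i x else f i x < b i) with hFeasT
      set FeasW := Finset.univ.filter (fun σ : Fin m → Bool =>
          (∀ i ∉ t, σ i = false) ∧ ∃ w : ↥W, ∀ i ∈ t,
            if σ i then c i < g i w else g i w < c i) with hFeasW
      have hboth : ∀ τ, Meet τ → Ppos τ ∧ Pneg τ := by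
        rintro τ ⟨x, hrel, hxj⟩
        obtain ⟨ε, hε, hper⟩ := zas_perturb v hrel
        constructor
        · refine ⟨x + (ε/2) • v, hper (ε/2) (by rw [abs_of_pos (by linarith)]; linarith), ?_⟩
          rw [map_add, map_smul, hfv, smul_eq_mul, mul_one, hxj]
          linarith
        · refine ⟨x + (-(ε/2)) • v, hper (-(ε/2))
            (by rw [abs_neg, abs_of_pos (by linarith)]; linarith), ?_⟩
          rw [map_add, map_smul, hfv, smul_eq_mul, mul_one, hxj]
          linarith
      have hseg : ∀ τ, Ppos τ → Pneg τ → Meet τ := by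
        rintro τ ⟨xp, hp, hpj⟩ ⟨xn, hn, hnj⟩
        have hd : 0 < f j xp - f j xn := by linarith
        set θ : ℝ := (b j - f j xn) / (f j xp - f j xn) with hθ
        have hθ0 : 0 < θ := div_pos (by linarith) hd
        have hθ1 : θ < 1 := (div_lt_one hd).2 (by linarith)
        have hfi : ∀ i : Fin m, f i (xn + θ • (xp - xn)) = f i xn + θ * (f i xp - f i xn) := by
          intro i; rw [map_add, map_smul, map_sub, smul_eq_mul]
        refine ⟨xn + θ • (xp - xn), fun i hi => ?_, ?_⟩
        · have h1 := hp i hi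
          have h2 := hn i hi
          by_cases hτ : τ i = true
          · rw [if_pos hτ] at h1 h2 ⊢
            rw [hfi]; nlinarith
          · rw [if_neg hτ] at h1 h2 ⊢
            rw [hfi]; nlinarith
        · rw [hfi, hθ, div_mul_cancel₀ _ hd.ne']
          ring
      have hone : ∀ τ ∈ FeasT, Ppos τ ∨ Pneg τ := by
        intro τ hτ
        rw [hFeasT, Finset.mem_filter] at hτ
        obtain ⟨-, -, x, hx⟩ := hτ
        rcases lt_trichotomy (f j x) (b j) with h | h | h
        · exact Or.inr ⟨x, hx, h⟩
        · exact Or.inl ((hboth τ ⟨x, hx, h⟩).1)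
        · exact Or.inl ⟨x, hx, h⟩
      have hres : ∀ σ ∈ FeasIns, Function.update σ j false ∈ FeasT := by
        intro σ hσ
        rw [hFeasIns, Finset.mem_filter] at hσ
        obtain ⟨-, hoff, x, hx⟩ := hσ
        rw [hFeasT, Finset.mem_filter]
        refine ⟨Finset.mem_univ _, fun i hi => ?_, x, fun i hi => ?_⟩
        · by_cases hij : i = j
          · subst hij; rw [Function.update_self]
          · rw [Function.update_of_ne hij]
            exact hoff i (by simp [Finset.mem_insert, hij, hi])
        · have hij : i ≠ j := fun h => hj (h ▸ hi)
          rw [Function.update_of_ne hij]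
          exact hx i (Finset.mem_insert_of_mem hi)
      have hfib : ∀ τ ∈ FeasT, (FeasIns.filter (fun σ => Function.update σ j false = τ)).card
          = if Meet τ then 2 else 1 := by
        intro τ hτmem
        have hτ := hτmem
        rw [hFeasT, Finset.mem_filter] at hτ
        obtain ⟨-, hoffτ, xτ, hxτ⟩ := hτ
        have hτj : τ j = false := hoffτ j hj
        have hupdτ : Function.update τ j false = τ := by
          funext i
          by_cases hij : i = j
          · subst hij; rw [Function.update_self, hτj]
          · rw [Function.update_of_ne hij]
        have hmem1 : ∀ σ, σ ∈ FeasIns.filter (fun σ => Function.update σ j false = τ) ↔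
            ((σ = Function.update τ j true ∧ Ppos τ) ∨ (σ = τ ∧ Pneg τ)) := by
          intro σ
          rw [Finset.mem_filter, hFeasIns, Finset.mem_filter]
          constructor
          · rintro ⟨⟨-, hoffσ, x, hx⟩, hσres⟩
            have hτσ : ∀ i, i ≠ j → τ i = σ i := by
              intro i hij
              rw [← hσres, Function.update_of_ne hij]
            have hσup : σ = Function.update τ j (σ j) := by
              funext i
              by_cases hij : i = j
              · subst hij; rw [Function.update_self]
              · rw [Function.update_of_ne hij, hτσ i hij]
            have hrelτ : ∀ i ∈ t, if τ i then b i < f i x else f i x < b i := by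
              intro i hi
              have hij : i ≠ j := fun h => hj (h ▸ hi)
              rw [hτσ i hij]
              exact hx i (Finset.mem_insert_of_mem hi)
            have hxj := hx j (Finset.mem_insert_self j t)
            cases hσj : σ j with
            | true =>
                rw [hσj, if_pos rfl] at hxj
                exact Or.inl ⟨by rw [hσup, hσj], x, hrelτ, hxj⟩
            | false =>
                rw [hσj] at hxj
                rw [if_neg (by simp)] at hxj
                refine Or.inr ⟨?_, x, hrelτ, hxj⟩
                rw [hσup, hσj, hupdτ]
          · rintro (⟨rfl, xp, hp, hpj⟩ | ⟨rfl, xn, hn, hnj⟩)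
            · refine ⟨⟨Finset.mem_univ _, fun i hi => ?_, xp, fun i hi => ?_⟩, ?_⟩
              · have hij : i ≠ j := fun h => hi (h ▸ Finset.mem_insert_self j t)
                rw [Function.update_of_ne hij]
                exact hoffτ i (fun h => hi (Finset.mem_insert_of_mem h))
              · rcases Finset.mem_insert.1 hi with rfl | hi'
                · rw [Function.update_self, if_pos rfl]
                  exact hpj
                · have hij : i ≠ j := fun h => hj (h ▸ hi')
                  rw [Function.update_of_ne hij]
                  exact hp i hi'
              · rw [Function.update_idem, hupdτ]
            · refine ⟨⟨Finset.mem_univ _, fun i hi => ?_, xn, fun i hi => ?_⟩, hupdτ⟩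
              · exact hoffτ i (fun h => hi (Finset.mem_insert_of_mem h))
              · rcases Finset.mem_insert.1 hi with rfl | hi'
                · rw [hτj, if_neg (by simp)]
                  exact hnj
                · exact hn i hi'
        have hne : Function.update τ j true ≠ τ := by
          intro h
          have := congrFun h j
          rw [Function.update_self, hτj] at this
          simp at this
        by_cases hM : Meet τ
        · obtain ⟨hPp, hPn⟩ := hboth τ hM
          have hset : FeasIns.filter (fun σ => Function.update σ j false = τ)
              = {Function.update τ j true, τ} := by
            ext σ
            rw [hmem1, Finset.mem_insert, Finset.mem_singleton]
            constructor
            · rintro (⟨rfl, -⟩ | ⟨rfl, -⟩)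
              · exact Or.inl rfl
              · exact Or.inr rfl
            · rintro (rfl | rfl)
              · exact Or.inl ⟨rfl, hPp⟩
              · exact Or.inr ⟨rfl, hPn⟩
          rw [if_pos hM, hset, Finset.card_insert_of_notMem (by simpa using hne),
            Finset.card_singleton]
        · have hnotboth : ¬(Ppos τ ∧ Pneg τ) := fun ⟨h1, h2⟩ => hM (hseg τ h1 h2)
          rw [if_neg hM]
          rcases hone τ hτmem with hPp | hPn
          · have hnPn : ¬ Pneg τ := fun h => hnotboth ⟨hPp, h⟩
            have hset : FeasIns.filter (fun σ => Function.update σ j false = τ)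
                = {Function.update τ j true} := by
              ext σ
              rw [hmem1, Finset.mem_singleton]
              constructor
              · rintro (⟨rfl, -⟩ | ⟨rfl, hn⟩)
                · rfl
                · exact absurd hn hnPn
              · rintro rfl
                exact Or.inl ⟨rfl, hPp⟩
            rw [hset, Finset.card_singleton]
          · have hnPp : ¬ Ppos τ := fun h => hnotboth ⟨h, hPn⟩
            have hset : FeasIns.filter (fun σ => Function.update σ j false = τ) = {τ} := by
              ext σ
              rw [hmem1, Finset.mem_singleton]
              constructor
              · rintro (⟨rfl, hp⟩ | ⟨rfl, -⟩)
                · exact absurd hp hnPp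
                · rfl
              · rintro rfl
                exact Or.inr ⟨rfl, hPn⟩
            rw [hset, Finset.card_singleton]
      have hcount : FeasIns.card = FeasT.card + (FeasT.filter Meet).card := by
        rw [Finset.card_eq_sum_card_fiberwise hres, Finset.sum_congr rfl hfib]
        have h2 : ∀ τ ∈ FeasT, (if Meet τ then 2 else 1) = 1 + (if Meet τ then 1 else 0) := by
          intro τ _
          split <;> rfl
        rw [Finset.sum_congr rfl h2, Finset.sum_add_distrib, Finset.sum_const, smul_eq_mul,
          mul_one, ← Finset.card_filter]
      have hMW : FeasT.filter Meet = FeasW := by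
        ext σ
        rw [hFeasW, hFeasT, Finset.mem_filter, Finset.mem_filter, Finset.mem_filter]
        constructor
        · rintro ⟨⟨-, hoff, -⟩, x, hrel, hxj⟩
          refine ⟨Finset.mem_univ _, hoff, ⟨x - x0, ?_⟩, fun i hi => ?_⟩
          · rw [LinearMap.mem_ker, map_sub, hxj, hx0, sub_self]
          · have hthis := hrel i hi
            rw [hgval]
            have e1 : f i ((⟨x - x0, by rw [LinearMap.mem_ker, map_sub, hxj, hx0, sub_self]⟩ :
                ↥W) : V) = f i x - f i x0 := by rw [map_sub]
            by_cases hσi : σ i = true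
            · rw [if_pos hσi] at hthis ⊢
              rw [e1, hc]
              simp only []
              linarith
            · rw [if_neg hσi] at hthis ⊢
              rw [e1, hc]
              simp only []
              linarith
        · rintro ⟨-, hoff, w, hw⟩
          have hrel : ∀ i ∈ t, if σ i then b i < f i (x0 + w.1) else f i (x0 + w.1) < b i := by
            intro i hi
            have hthis := hw i hi
            rw [hgval] at hthis
            by_cases hσi : σ i = true
            · rw [if_pos hσi] at hthis ⊢
              rw [map_add]
              rw [hc] at hthis
              simp only [] at hthis
              linarith
            · rw [if_neg hσi] at hthis ⊢
              rw [map_add]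
              rw [hc] at hthis
              simp only [] at hthis
              linarith
          refine ⟨⟨Finset.mem_univ _, hoff, x0 + w.1, hrel⟩, x0 + w.1, hrel, ?_⟩
          rw [map_add, hx0, hwker, add_zero]
      -- sum side
      have hsum : ∑ B ∈ (insert j t).powerset.filter (fun B => ∃ x : V, ∀ i ∈ B, f i x = b i),
            (-1 : ℤ) ^ (B.card - Module.finrank ℝ (Submodule.span ℝ (f '' ↑B)))
          = (∑ B ∈ t.powerset.filter (fun B => ∃ x : V, ∀ i ∈ B, f i x = b i),
              (-1 : ℤ) ^ (B.card - Module.finrank ℝ (Submodule.span ℝ (f '' ↑B))))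
            + ∑ B ∈ t.powerset.filter (fun B => ∃ w : ↥W, ∀ i ∈ B, g i w = c i),
              (-1 : ℤ) ^ (B.card - Module.finrank ℝ (Submodule.span ℝ (g '' ↑B))) := by
        rw [Finset.sum_filter, Finset.sum_filter, Finset.sum_filter,
          Finset.sum_powerset_insert hj]
        congr 1
        refine Finset.sum_congr rfl fun B hB => ?_
        rw [Finset.mem_powerset] at hB
        have hjB : j ∉ B := fun h => hj (hB h)
        have hcent : (∃ x : V, ∀ i ∈ insert j B, f i x = b i) ↔
            (∃ w : ↥W, ∀ i ∈ B, g i w = c i) := by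
          constructor
          · rintro ⟨x, hx⟩
            have hxj : f j x = b j := hx j (Finset.mem_insert_self j B)
            refine ⟨⟨x - x0, by rw [LinearMap.mem_ker, map_sub, hxj, hx0, sub_self]⟩,
              fun i hi => ?_⟩
            rw [hgval]
            show f i (x - x0) = c i
            rw [map_sub, hx i (Finset.mem_insert_of_mem hi), hc]
          · rintro ⟨w, hw⟩
            refine ⟨x0 + w.1, fun i hi => ?_⟩
            rcases Finset.mem_insert.1 hi with rfl | hi'
            · rw [map_add, hx0, hwker, add_zero]
            · have hthis := hw i hi'
              rw [hgval, hc] at hthis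
              rw [map_add, hthis]
              ring
        have hrank := zas_rank_restrict f u hu B hjB
        by_cases hcB : ∃ w : ↥W, ∀ i ∈ B, g i w = c i
        · rw [if_pos hcB, if_pos (hcent.2 hcB), Finset.card_insert_of_notMem hjB]
          have hgim : ((fun i => (f i).comp (LinearMap.ker (f j)).subtype) '' ↑B) = g '' ↑B := rfl
          rw [hgim] at hrank
          rw [← hrank, Nat.add_sub_add_right]
        · rw [if_neg hcB, if_neg (fun h => hcB (hcent.1 h))]
      rw [hsum, ← ih V f b, ← ih (↥W) g c, ← hFeasT, ← hFeasW, hcount, hMW]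
      push_cast
      ring

lemma zas_components {n m : ℕ} (a : Fin m → EuclideanSpace ℝ (Fin n)) (b : Fin m → ℝ) :
    Nat.card (ConnectedComponents
        {x : EuclideanSpace ℝ (Fin n) // ∀ i, inner ℝ (a i) x ≠ b i}) =
      (Finset.univ.filter (fun σ : Fin m → Bool =>
        (∃ x : EuclideanSpace ℝ (Fin n), ∀ i,
          if σ i then b i < inner ℝ (a i) x else (inner ℝ (a i) x : ℝ) < b i))).card := by
  let E := EuclideanSpace ℝ (Fin n)
  set Ω := {x : E // ∀ i, (inner ℝ (a i) x : ℝ) ≠ b i} with hΩ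
  set F : (Fin m → Bool) → Set E := fun σ =>
    {x | ∀ i, if σ i then b i < inner ℝ (a i) x else (inner ℝ (a i) x : ℝ) < b i} with hF
  set φ : Ω → (Fin m → Bool) := fun x i => decide (b i < inner ℝ (a i) x.val) with hφ
  have hFopen : ∀ σ, IsOpen (F σ) := by
    intro σ
    have : F σ = ⋂ i, {x : E | if σ i then b i < inner ℝ (a i) x else (inner ℝ (a i) x : ℝ) < b i} := by
      ext x; simp [hF, Set.mem_iInter]
    rw [this]
    refine isOpen_iInter_of_finite fun i => ?_
    have hc : Continuous (fun x : E => (inner ℝ (a i) x : ℝ)) :=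
      Continuous.inner continuous_const continuous_id
    by_cases h : σ i
    · simpa [h, Set.preimage] using (isOpen_Ioi (a := b i)).preimage hc
    · simpa [h, Set.preimage] using (isOpen_Iio (a := b i)).preimage hc
  have hFconv : ∀ σ, Convex ℝ (F σ) := by
    intro σ
    have : F σ = ⋂ i, {x : E | if σ i then b i < inner ℝ (a i) x else (inner ℝ (a i) x : ℝ) < b i} := by
      ext x; simp [hF, Set.mem_iInter]
    rw [this]
    refine convex_iInter fun i => ?_
    have hlin : IsLinearMap ℝ (fun x : E => (inner ℝ (a i) x : ℝ)) :=
      ⟨fun x y => inner_add_right _ _ _, fun c x => real_inner_smul_right _ _ _⟩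
    by_cases h : σ i
    · simpa [h] using convex_halfSpace_gt hlin (b i)
    · simpa [h] using convex_halfSpace_lt hlin (b i)
  have key1 : ∀ x : Ω, x.val ∈ F (φ x) := by
    intro x
    simp only [hF, hφ, Set.mem_setOf_eq, decide_eq_true_eq]
    intro i
    by_cases h : b i < inner ℝ (a i) x.val
    · rw [if_pos h]; exact h
    · rw [if_neg h]; exact lt_of_le_of_ne (not_lt.1 h) (x.2 i)
  have key2 : ∀ (x : Ω) (σ), x.val ∈ F σ → φ x = σ := by
    intro x σ hx
    funext i
    have := hx i
    cases hσ : σ i with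
    | true =>
        simp only [hσ, if_true] at this
        simp only [hφ]
        exact decide_eq_true this
    | false =>
        simp only [hσ, if_false] at this
        simp only [hφ]
        exact decide_eq_false (not_lt.2 this.le)
  have key3 : ∀ σ, F σ ⊆ {x : E | ∀ i, (inner ℝ (a i) x : ℝ) ≠ b i} := by
    intro σ x hx i
    have := hx i
    split at this
    · exact (ne_of_lt this).symm
    · exact ne_of_lt this
  have comp_eq : ∀ x : Ω, connectedComponent x = Subtype.val ⁻¹' (F (φ x)) := by
    intro x
    have hpre : IsPreconnected (Subtype.val ⁻¹' (F (φ x)) : Set Ω) := by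
      have himg : Subtype.val '' (Subtype.val ⁻¹' (F (φ x)) : Set Ω) = F (φ x) := by
        rw [Set.image_preimage_eq_inter_range, Subtype.range_coe_subtype]
        exact Set.inter_eq_self_of_subset_left (key3 _)
      have h2 : IsPreconnected (Subtype.val '' (Subtype.val ⁻¹' (F (φ x)) : Set Ω)) := by
        rw [himg]; exact (hFconv _).isPreconnected
      exact Topology.IsInducing.subtypeVal.isPreconnected_image.mp h2
    have hopen : IsOpen (Subtype.val ⁻¹' (F (φ x)) : Set Ω) :=
      (hFopen _).preimage continuous_subtype_val
    have hclosed : IsClosed (Subtype.val ⁻¹' (F (φ x)) : Set Ω) := by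
      rw [← isOpen_compl_iff]
      have hcompl : (Subtype.val ⁻¹' (F (φ x)) : Set Ω)ᶜ =
          Subtype.val ⁻¹' (⋃ σ ∈ ({φ x}ᶜ : Set (Fin m → Bool)), F σ) := by
        ext y
        simp only [Set.mem_compl_iff, Set.mem_preimage, Set.mem_iUnion, Set.mem_singleton_iff]
        constructor
        · intro hy
          exact ⟨φ y, fun h => hy (h ▸ key1 y), key1 y⟩
        · rintro ⟨σ, hσ, hyσ⟩ hy
          exact hσ ((key2 y σ hyσ).symm.trans (key2 y _ hy))
        
      rw [hcompl]
      exact (isOpen_biUnion fun σ _ => hFopen σ).preimage continuous_subtype_val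
    refine subset_antisymm ?_ ?_
    · exact IsClopen.connectedComponent_subset ⟨hclosed, hopen⟩ (key1 x)
    · exact hpre.subset_connectedComponent (key1 x)
  -- build the bijection
  have hcard : Nat.card (ConnectedComponents Ω) = Nat.card {σ : Fin m → Bool // (F σ).Nonempty} := by
    refine Nat.card_congr (Equiv.ofBijective (fun cc => Quotient.liftOn' cc
      (fun x => (⟨φ x, ⟨x.val, key1 x⟩⟩ : {σ : Fin m → Bool // (F σ).Nonempty}))
      (fun x y (h : connectedComponent x = connectedComponent y) => ?_)) ⟨?_, ?_⟩)
    · have hy : (y : Ω) ∈ connectedComponent y := mem_connectedComponent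
      rw [← h, comp_eq x] at hy
      exact Subtype.ext (key2 y _ hy).symm
    · intro c1 c2
      refine Quotient.inductionOn₂' c1 c2 fun x y h => ?_
      simp only [Quotient.liftOn'_mk'', Subtype.mk.injEq] at h
      have hy : y.val ∈ F (φ x) := (Subtype.mk.inj h) ▸ key1 y
      have : (y : Ω) ∈ connectedComponent x := by rw [comp_eq x]; exact hy
      exact Quotient.sound' (connectedComponent_eq this)
    · rintro ⟨σ, x, hx⟩
      have hxΩ : ∀ i, (inner ℝ (a i) x : ℝ) ≠ b i := key3 σ hx
      refine ⟨Quotient.mk'' (⟨x, hxΩ⟩ : Ω), ?_⟩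
      simp only [Quotient.liftOn'_mk'']
      exact Subtype.ext (key2 ⟨x, hxΩ⟩ σ hx)
  rw [hcard, Nat.card_eq_fintype_card, Fintype.card_subtype]
  congr 1

/-- Zaslavsky's theorem: the number of regions of an arrangement `A` of
hyperplanes in `ℝ^n` equals `∑_{B ⊆ A central} (-1)^{|B| - rank B}`, where a
subarrangement `B` is central if the intersection of its hyperplanes is nonempty, and
`rank B` is the dimension of the span of the normal vectors of the hyperplanes in `B`. -/
theorem stmt_2 (n m : ℕ) (a : Fin m → EuclideanSpace ℝ (Fin n)) (b : Fin m → ℝ)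
    (ha : ∀ i, a i ≠ 0) :
    (Nat.card (ConnectedComponents
        {x : EuclideanSpace ℝ (Fin n) // ∀ i, inner ℝ (a i) x ≠ b i}) : ℤ) =
      ∑ B ∈ Finset.univ.filter (fun B : Finset (Fin m) =>
          (⋂ i ∈ B, {x : EuclideanSpace ℝ (Fin n) | inner ℝ (a i) x = b i}).Nonempty),
        (-1 : ℤ) ^ (B.card - Module.finrank ℝ (Submodule.span ℝ (a '' ↑B))) := by
  classical
  set f : Fin m → (EuclideanSpace ℝ (Fin n) →ₗ[ℝ] ℝ) :=
    fun i => (innerₗ (EuclideanSpace ℝ (Fin n))) (a i) with hf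
  have hfval : ∀ (i : Fin m) (x : EuclideanSpace ℝ (Fin n)), f i x = inner ℝ (a i) x :=
    fun i x => rfl
  have h1 := zas_components a b
  have h2 := zas_core (Finset.univ : Finset (Fin m)) (EuclideanSpace ℝ (Fin n)) f b
  have hfilter : (Finset.univ.filter (fun σ : Fin m → Bool =>
      (∀ i ∉ (Finset.univ : Finset (Fin m)), σ i = false) ∧
        ∃ x : EuclideanSpace ℝ (Fin n), ∀ i ∈ (Finset.univ : Finset (Fin m)),
          if σ i then b i < f i x else f i x < b i)) =
      (Finset.univ.filter (fun σ : Fin m → Bool =>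
        (∃ x : EuclideanSpace ℝ (Fin n), ∀ i,
          if σ i then b i < inner ℝ (a i) x else (inner ℝ (a i) x : ℝ) < b i))) := by
    refine Finset.filter_congr fun σ _ => ?_
    constructor
    · rintro ⟨-, x, hx⟩
      exact ⟨x, fun i => by simpa [hfval] using hx i (Finset.mem_univ i)⟩
    · rintro ⟨x, hx⟩
      exact ⟨fun i hi => absurd (Finset.mem_univ i) hi, x, fun i _ => by simpa [hfval] using hx i⟩
  have hinj : Function.Injective
      ((innerₗ (EuclideanSpace ℝ (Fin n))) : EuclideanSpace ℝ (Fin n) → _) := by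
    intro x y hxy
    have hz : ∀ z, (inner ℝ x z : ℝ) = inner ℝ y z := by
      intro z
      have : ((innerₗ (EuclideanSpace ℝ (Fin n))) x : EuclideanSpace ℝ (Fin n) →ₗ[ℝ] ℝ) z
          = ((innerₗ (EuclideanSpace ℝ (Fin n))) y : EuclideanSpace ℝ (Fin n) →ₗ[ℝ] ℝ) z := by rw [hxy]
      exact this
    have h0' : (inner ℝ (x - y) (x - y) : ℝ) = 0 := by
      rw [inner_sub_left, inner_sub_right, inner_sub_right, hz x, hz y]
      ring
    exact sub_eq_zero.1 (inner_self_eq_zero.1 h0')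
  have hrank : ∀ B : Finset (Fin m),
      Module.finrank ℝ (Submodule.span ℝ (f '' ↑B)) =
        Module.finrank ℝ (Submodule.span ℝ (a '' ↑B)) := by
    intro B
    have himg : f '' ↑B = (innerₗ (EuclideanSpace ℝ (Fin n))) '' (a '' ↑B) := by
      rw [← Set.image_comp]
      rfl
    rw [himg, ← Submodule.map_span]
    exact (LinearEquiv.finrank_eq
      (Submodule.equivMapOfInjective _ hinj (Submodule.span ℝ (a '' ↑B)))).symm
  have hsum : ∑ B ∈ (Finset.univ : Finset (Fin m)).powerset.filter
        (fun B => ∃ x : EuclideanSpace ℝ (Fin n), ∀ i ∈ B, f i x = b i),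
        (-1 : ℤ) ^ (B.card - Module.finrank ℝ (Submodule.span ℝ (f '' ↑B)))
      = ∑ B ∈ Finset.univ.filter (fun B : Finset (Fin m) =>
          (⋂ i ∈ B, {x : EuclideanSpace ℝ (Fin n) | inner ℝ (a i) x = b i}).Nonempty),
        (-1 : ℤ) ^ (B.card - Module.finrank ℝ (Submodule.span ℝ (a '' ↑B))) := by
    rw [Finset.powerset_univ]
    refine Finset.sum_congr ?_ ?_
    · apply Finset.filter_congr
      intro B _
      simp only [Set.Nonempty, Set.mem_iInter, Set.mem_setOf_eq, hfval]
    · intro B hB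
      rw [hrank B]
  rw [h1, ← hfilter, h2, hsum]
end

section
/- For integers d ≥ 1 and n ≥ d, the ratio (2n·sum_{i=0}^{d-1} binom(n-1, i) + 2d·sum_{i=0}^{d-1} binom(n, i)) / (sum_{i=0}^{d} binom(n, i)) is at most 2d·(1 + d/(n - d + 1)). -/
open Finset in
lemma stmt5_aux1 (d n : ℕ) (hn : 1 ≤ n) :
    n * ∑ i ∈ range d, (n - 1).choose i ≤ d * ∑ i ∈ range (d + 1), n.choose i := by
  obtain ⟨m, rfl⟩ := Nat.exists_eq_add_of_le hn
  have h1 : (1 + m) * ∑ i ∈ range d, (1 + m - 1).choose i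
      = ∑ i ∈ range d, (1 + m).choose (i + 1) * (i + 1) := by
    rw [Finset.mul_sum]
    refine Finset.sum_congr rfl fun i _ => ?_
    simpa [Nat.add_comm 1 m, Nat.succ_eq_add_one] using Nat.add_one_mul_choose_eq m i
  rw [h1]
  calc ∑ i ∈ range d, (1 + m).choose (i + 1) * (i + 1)
      ≤ ∑ i ∈ range d, (1 + m).choose (i + 1) * d := by
        refine Finset.sum_le_sum fun i hi => ?_
        exact Nat.mul_le_mul_left _ (Finset.mem_range.mp hi)
    _ = d * ∑ i ∈ range d, (1 + m).choose (i + 1) := by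
        rw [Finset.mul_sum]; exact Finset.sum_congr rfl fun i _ => Nat.mul_comm _ _
    _ ≤ d * ∑ i ∈ range (d + 1), (1 + m).choose i := by
        refine Nat.mul_le_mul_left _ ?_
        rw [Finset.sum_range_succ']
        exact Nat.le_add_right _ _

open Finset in
lemma stmt5_aux2 (d n : ℕ) (hn : d ≤ n) :
    (n - d + 1) * ∑ i ∈ range d, n.choose i ≤ d * ∑ i ∈ range (d + 1), n.choose i := by
  have key : ∀ i ∈ range d, (n - d + 1) * n.choose i ≤ d * n.choose (i + 1) := by
    intro i hi
    have hi' : i < d := Finset.mem_range.mp hi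
    refine Nat.le_of_mul_le_mul_right ?_ (Nat.succ_pos i)
    have h := Nat.choose_succ_right_eq n i
    have h3 : (n - d + 1) * (i + 1) ≤ (n - i) * d :=
      Nat.mul_le_mul (by omega) (by omega)
    show (n - d + 1) * n.choose i * (i + 1) ≤ d * n.choose (i + 1) * (i + 1)
    calc (n - d + 1) * n.choose i * (i + 1)
        = n.choose i * ((n - d + 1) * (i + 1)) := by ring
      _ ≤ n.choose i * ((n - i) * d) := Nat.mul_le_mul_left _ h3
      _ = d * (n.choose (i + 1) * (i + 1)) := by rw [h]; ring
      _ = d * n.choose (i + 1) * (i + 1) := by ring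
  calc (n - d + 1) * ∑ i ∈ range d, n.choose i
      = ∑ i ∈ range d, (n - d + 1) * n.choose i := Finset.mul_sum _ _ _
    _ ≤ ∑ i ∈ range d, d * n.choose (i + 1) := Finset.sum_le_sum key
    _ = d * ∑ i ∈ range d, n.choose (i + 1) := (Finset.mul_sum _ _ _).symm
    _ ≤ d * ∑ i ∈ range (d + 1), n.choose i := by
        refine Nat.mul_le_mul_left _ ?_
        rw [Finset.sum_range_succ']
        exact Nat.le_add_right _ _

/-- for integers `d ≥ 1` and `n ≥ d`,
`(2n·∑_{i=0}^{d-1} C(n-1,i) + 2d·∑_{i=0}^{d-1} C(n,i)) / ∑_{i=0}^{d} C(n,i)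
  ≤ 2d·(1 + d/(n-d+1))`. -/
theorem stmt_5 (d n : ℕ) (hd : 1 ≤ d) (hn : d ≤ n) :
    (2 * (n : ℝ) * ∑ i ∈ Finset.range d, ((n - 1).choose i : ℝ) +
        2 * (d : ℝ) * ∑ i ∈ Finset.range d, (n.choose i : ℝ)) /
        (∑ i ∈ Finset.range (d + 1), (n.choose i : ℝ)) ≤
      2 * (d : ℝ) * (1 + (d : ℝ) / ((n : ℝ) - (d : ℝ) + 1)) := by
  set A : ℝ := ∑ i ∈ Finset.range d, ((n - 1).choose i : ℝ) with hA
  set B : ℝ := ∑ i ∈ Finset.range d, (n.choose i : ℝ) with hB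
  set S : ℝ := ∑ i ∈ Finset.range (d + 1), (n.choose i : ℝ) with hS
  have hSpos : 0 < S := by
    rw [hS]
    refine Finset.sum_pos (fun i hi => ?_) ⟨0, Finset.mem_range.mpr (Nat.succ_pos d)⟩
    exact_mod_cast Nat.choose_pos (by
      have := Finset.mem_range.mp hi; omega)
  set e : ℝ := (n : ℝ) - (d : ℝ) + 1 with he
  have hecast : ((n - d + 1 : ℕ) : ℝ) = e := by
    push_cast [Nat.cast_sub hn]; rw [he]
  have hepos : 0 < e := by
    rw [he]
    have : (d : ℝ) ≤ (n : ℝ) := by exact_mod_cast hn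
    linarith
  have h1 : (n : ℝ) * A ≤ (d : ℝ) * S := by
    have := stmt5_aux1 d n (le_trans hd hn)
    have := (Nat.cast_le (α := ℝ)).mpr this
    push_cast at this
    simpa [hA, hS] using this
  have h2 : e * B ≤ (d : ℝ) * S := by
    have := stmt5_aux2 d n hn
    have := (Nat.cast_le (α := ℝ)).mpr this
    push_cast [Nat.cast_sub hn] at this
    simpa [hB, hS, ← he] using this
  rw [div_le_iff₀ hSpos]
  have hrhs : 2 * (d : ℝ) * (1 + (d : ℝ) / e) * S = 2 * (d : ℝ) * (e + d) * S / e := by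
    field_simp
  rw [hrhs, le_div_iff₀ hepos]
  have hd0 : (0 : ℝ) ≤ (d : ℝ) := Nat.cast_nonneg d
  nlinarith [mul_le_mul_of_nonneg_left h2 hd0, mul_le_mul_of_nonneg_right h1 (le_of_lt hepos)]
end

section
/- Let f(L) denote the total face count bound defined recursively by: f(1) = 2n·sum_{i=0}^{d-1} binom(n-1, i) + 2d·sum_{i=0}^{d-1} binom(n, i), and for L ≥ 2, f(L) = 2n·sum_{i=0}^{d-1} binom(n-1, i)·r(L-1) + sum_{i=0}^{d-1} binom(n, i)·f(L-1), where r(L-1) = (prod over L-1 layers) sum_{j=0}^{d} binom(n, j) ≤ (sum_{j=0}^{d} binom(n, j))^{L-1}. Then for fixed d, f(L) = (2/((d-1)!(d!)^{L-1}))·n^{dL} + O(n^{dL-1}) as n → ∞. -/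
open Asymptotics Filter

/-- `g n = c * n^k + O(n^(k-1))`, with integer exponents. -/
def PA (c : ℝ) (k : ℤ) (g : ℕ → ℝ) : Prop :=
  (fun n : ℕ => g n - c * (n : ℝ) ^ k) =O[atTop] fun n : ℕ => (n : ℝ) ^ (k - 1)

lemma zpow_isBigO_zpow {j k : ℤ} (h : j ≤ k) :
    (fun n : ℕ => (n : ℝ) ^ j) =O[atTop] fun n : ℕ => (n : ℝ) ^ k := by
  apply IsBigO.of_bound 1
  filter_upwards [eventually_ge_atTop 1] with n hn
  have h1 : (1:ℝ) ≤ (n:ℝ) := by exact_mod_cast hn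
  have h0 : (0:ℝ) < (n:ℝ) := by linarith
  simp only [Real.norm_eq_abs, one_mul]
  rw [abs_of_nonneg (zpow_nonneg h0.le _), abs_of_nonneg (zpow_nonneg h0.le _)]
  exact zpow_le_zpow_right₀ h1 h

lemma mul_zpow_ev (j k : ℤ) :
    (fun n : ℕ => (n : ℝ) ^ j * (n : ℝ) ^ k) =ᶠ[atTop] fun n : ℕ => (n : ℝ) ^ (j + k) := by
  filter_upwards [eventually_ge_atTop 1] with n hn
  have h0 : ((n:ℝ)) ≠ 0 := by positivity
  rw [← zpow_add₀ h0]

lemma PA.isBigO {c : ℝ} {k : ℤ} {g : ℕ → ℝ} (h : PA c k g) :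
    (fun n : ℕ => g n) =O[atTop] fun n : ℕ => (n : ℝ) ^ k := by
  have h2 : (fun n : ℕ => c * (n:ℝ)^k) =O[atTop] fun n : ℕ => (n:ℝ)^k :=
    (isBigO_refl _ _).const_mul_left c
  have h3 := (h.trans (zpow_isBigO_zpow (by omega))).add h2
  simpa using h3

lemma PA.congr {c c' : ℝ} {k k' : ℤ} {g g' : ℕ → ℝ} (h : PA c k g)
    (hc : c = c') (hk : k = k') (hg : ∀ n, g n = g' n) : PA c' k' g' := by
  subst hc hk
  exact h.congr_left fun n => by rw [hg]

lemma PA.add_isBigO {c : ℝ} {k : ℤ} {g h : ℕ → ℝ} (hg : PA c k g)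
    (hh : (fun n : ℕ => h n) =O[atTop] fun n : ℕ => (n : ℝ) ^ (k - 1)) :
    PA c k (fun n => g n + h n) := by
  have := hg.add hh
  exact this.congr_left fun n => by ring

lemma PA.mul {c c' : ℝ} {k k' : ℤ} {g g' : ℕ → ℝ} (h : PA c k g) (h' : PA c' k' g') :
    PA (c * c') (k + k') (fun n => g n * g' n) := by
  have t1 : (fun n : ℕ => (g n - c * (n:ℝ)^k) * g' n) =O[atTop]
      fun n : ℕ => (n:ℝ)^(k - 1) * (n:ℝ)^k' := IsBigO.mul h (PA.isBigO h')
  have t2 : (fun n : ℕ => (c * (n:ℝ)^k) * (g' n - c' * (n:ℝ)^k')) =O[atTop]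
      fun n : ℕ => (n:ℝ)^k * (n:ℝ)^(k' - 1) :=
    ((isBigO_refl (fun n : ℕ => (n:ℝ)^k) atTop).const_mul_left c).mul h'
  have t1' := t1.trans ((mul_zpow_ev (k-1) k').isBigO.trans (zpow_isBigO_zpow (j := k-1+k') (k := k+k'-1) (by omega)))
  have t2' := t2.trans ((mul_zpow_ev k (k'-1)).isBigO.trans (zpow_isBigO_zpow (j := k+(k'-1)) (k := k+k'-1) (by omega)))
  have T := t1'.add t2'
  apply T.congr' _ EventuallyEq.rfl
  filter_upwards [eventually_ge_atTop 1] with n hn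
  have h0 : ((n:ℝ)) ≠ 0 := by positivity
  have e : (n:ℝ)^(k+k') = (n:ℝ)^k * (n:ℝ)^k' := zpow_add₀ h0 _ _
  rw [e]; ring

lemma PA.pow {c : ℝ} {k : ℤ} {g : ℕ → ℝ} (h : PA c k g) (m : ℕ) :
    PA (c ^ m) (k * m) (fun n => g n ^ m) := by
  induction m with
  | zero =>
    unfold PA
    apply (isBigO_zero _ _).congr_left
    intro n; simp
  | succ m ih =>
    have := ih.mul h
    exact this.congr (by rw [pow_succ]) (by push_cast; ring) (fun n => by rw [pow_succ])

lemma desc_le_pow (n k : ℕ) : ((n.descFactorial k : ℕ) : ℝ) ≤ (n:ℝ)^k := by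
  exact_mod_cast Nat.cast_le.mpr (n.descFactorial_le_pow k)

lemma pow_sub_desc_le (n k : ℕ) :
    (n:ℝ)^k - ((n.descFactorial k : ℕ) : ℝ) ≤ ((k:ℝ)*k) * (n:ℝ)^(k-1) := by
  induction k with
  | zero => simp
  | succ k ih =>
    rcases Nat.eq_zero_or_pos k with rfl | hk
    · simp [Nat.descFactorial]
    · rcases Nat.lt_or_ge n k with hnk | hnk
      · have hd : n.descFactorial (k+1) = 0 :=
          Nat.descFactorial_eq_zero_iff_lt.mpr (by omega)
        rw [hd]
        have hN : (n:ℝ) ≤ (k:ℝ) := by exact_mod_cast hnk.le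
        have h0 : (0:ℝ) ≤ (n:ℝ) := by positivity
        have e : (k+1) - 1 = k := by omega
        rw [e]
        have hpow : (0:ℝ) ≤ (n:ℝ)^k := by positivity
        push_cast
        have : (n:ℝ)^(k+1) = (n:ℝ) * (n:ℝ)^k := by ring
        rw [this]
        nlinarith [pow_nonneg h0 k]
      · have hd : (n.descFactorial (k+1) : ℝ) = ((n:ℝ) - k) * (n.descFactorial k : ℝ) := by
          rw [Nat.descFactorial_succ]
          push_cast [Nat.cast_sub hnk]
          ring
        have hKN : (k:ℝ) ≤ (n:ℝ) := by exact_mod_cast hnk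
        have h0 : (0:ℝ) ≤ (n:ℝ) := by positivity
        have hD := desc_le_pow n k
        have e1 : (n:ℝ) * (n:ℝ)^(k-1) = (n:ℝ)^k := by
          rw [← pow_succ']
          congr 1
          omega
        have e2 : (k+1) - 1 = k := by omega
        rw [e2, hd]
        have hK0 : (0:ℝ) ≤ (k:ℝ) := by positivity
        have h1 : (n:ℝ) * ((n:ℝ)^k - (n.descFactorial k : ℝ)) ≤ (n:ℝ) * (((k:ℝ)*k) * (n:ℝ)^(k-1)) :=
          mul_le_mul_of_nonneg_left ih h0
        have h1' : (n:ℝ)*(n:ℝ)^k - (n:ℝ)*(n.descFactorial k : ℝ) ≤ (k:ℝ)*(k:ℝ)*(n:ℝ)^k := by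
          calc (n:ℝ)*(n:ℝ)^k - (n:ℝ)*(n.descFactorial k : ℝ)
              = (n:ℝ) * ((n:ℝ)^k - (n.descFactorial k : ℝ)) := by ring
            _ ≤ (n:ℝ) * (((k:ℝ)*k) * (n:ℝ)^(k-1)) := h1
            _ = (k:ℝ)*(k:ℝ)*((n:ℝ) * (n:ℝ)^(k-1)) := by ring
            _ = (k:ℝ)*(k:ℝ)*(n:ℝ)^k := by rw [e1]
        have h2' : (k:ℝ)*(n.descFactorial k : ℝ) ≤ (k:ℝ)*(n:ℝ)^k :=
          mul_le_mul_of_nonneg_left hD hK0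
        have hpk : (n:ℝ)^(k+1) = (n:ℝ)*(n:ℝ)^k := by ring
        push_cast
        nlinarith [h1', h2', hpk, mul_nonneg hK0 (pow_nonneg h0 k), pow_nonneg h0 k]

lemma choose_diff_bound (n k : ℕ) :
    |(n.choose k : ℝ) - (n:ℝ)^k / (k.factorial : ℝ)| ≤
      (k:ℝ)*k / (k.factorial:ℝ) * (n:ℝ)^(k-1) := by
  have hfac : (0:ℝ) < (k.factorial:ℝ) := by exact_mod_cast k.factorial_pos
  have edf : ((n.descFactorial k : ℕ):ℝ) = (k.factorial:ℝ) * (n.choose k:ℝ) := by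
    exact_mod_cast Nat.descFactorial_eq_factorial_mul_choose n k
  have e : (n.choose k : ℝ) = (n.descFactorial k : ℝ) / (k.factorial:ℝ) := by
    rw [eq_div_iff hfac.ne', edf]; ring
  have hD := desc_le_pow n k
  rw [e, abs_sub_comm, div_sub_div_same, abs_of_nonneg (div_nonneg (by linarith) hfac.le)]
  calc ((n:ℝ)^k - (n.descFactorial k : ℝ)) / (k.factorial:ℝ)
      ≤ (((k:ℝ)*k) * (n:ℝ)^(k-1)) / (k.factorial:ℝ) :=
        div_le_div_of_nonneg_right (pow_sub_desc_le n k) hfac.le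
    _ = (k:ℝ)*k / (k.factorial:ℝ) * (n:ℝ)^(k-1) := by ring

lemma choose_PA (k : ℕ) : PA (1/(k.factorial:ℝ)) (k:ℤ) (fun n => (n.choose k : ℝ)) := by
  rcases Nat.eq_zero_or_pos k with rfl | hk
  · unfold PA
    apply (isBigO_zero _ _).congr_left
    intro n; simp
  · apply IsBigO.of_bound ((k:ℝ)*k / (k.factorial:ℝ))
    filter_upwards [eventually_ge_atTop 1] with n hn
    have h1 : (1:ℝ) ≤ (n:ℝ) := by exact_mod_cast hn
    have e1 : ((n:ℝ))^((k:ℤ)) = (n:ℝ)^k := zpow_natCast _ _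
    have e2 : ((n:ℝ))^((k:ℤ)-1) = (n:ℝ)^(k-1:ℕ) := by
      rw [show (k:ℤ)-1 = ((k-1:ℕ):ℤ) by omega, zpow_natCast]
    simp only [Real.norm_eq_abs, e1, e2]
    rw [show |(n:ℝ)^(k-1:ℕ)| = (n:ℝ)^(k-1:ℕ) from abs_of_nonneg (by positivity)]
    have h := choose_diff_bound n k
    calc |(n.choose k : ℝ) - 1/(k.factorial:ℝ) * (n:ℝ)^k|
        = |(n.choose k : ℝ) - (n:ℝ)^k / (k.factorial:ℝ)| := by rw [one_div, inv_mul_eq_div]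
      _ ≤ (k:ℝ)*k / (k.factorial:ℝ) * (n:ℝ)^(k-1) := h

lemma choose_pred_isBigO (j : ℕ) :
    (fun n : ℕ => ((n-1).choose j : ℝ)) =O[atTop] fun n : ℕ => (n:ℝ)^(j:ℤ) := by
  apply IsBigO.of_bound 1
  filter_upwards [eventually_ge_atTop 1] with n hn
  have h1 : (1:ℝ) ≤ (n:ℝ) := by exact_mod_cast hn
  simp only [Real.norm_eq_abs, one_mul]
  rw [abs_of_nonneg (by positivity), abs_of_nonneg (zpow_nonneg (by positivity) _),
    zpow_natCast]
  calc ((n-1).choose j : ℝ) ≤ (((n-1:ℕ)):ℝ)^j := by exact_mod_cast Nat.choose_le_pow (n-1) j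
    _ ≤ (n:ℝ)^j := by
        apply pow_le_pow_left₀ (by positivity)
        exact_mod_cast Nat.sub_le n 1

lemma choose_pred_PA (k : ℕ) : PA (1/(k.factorial:ℝ)) (k:ℤ) (fun n => ((n-1).choose k : ℝ)) := by
  rcases Nat.eq_zero_or_pos k with rfl | hk
  · unfold PA
    apply (isBigO_zero _ _).congr_left
    intro n; simp
  · obtain ⟨j, rfl⟩ : ∃ j, k = j + 1 := ⟨k - 1, by omega⟩
    have H1 := choose_PA (j+1)
    have he : ((j+1:ℕ):ℤ) - 1 = (j:ℤ) := by push_cast; ring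
    have H2 : (fun n : ℕ => ((n-1).choose j : ℝ)) =O[atTop]
        fun n : ℕ => (n:ℝ)^(((j+1:ℕ):ℤ)-1) := by rw [he]; exact choose_pred_isBigO j
    unfold PA
    apply (H1.sub H2).congr' _ EventuallyEq.rfl
    filter_upwards [eventually_ge_atTop 1] with n hn
    have hP : (n:ℕ).choose (j+1) = (n-1).choose j + (n-1).choose (j+1) := by
      conv_lhs => rw [show n = (n-1)+1 by omega]
      rw [Nat.choose_succ_succ]
    have : ((n-1).choose (j+1) : ℝ) = (n.choose (j+1) : ℝ) - ((n-1).choose j : ℝ) := by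
      rw [hP]; push_cast; ring
    rw [this]; ring

lemma sum_choose_isBigO (m : ℕ) :
    (fun n : ℕ => ∑ i ∈ Finset.range m, (n.choose i : ℝ)) =O[atTop]
      fun n : ℕ => (n:ℝ)^((m:ℤ)-1) := by
  apply IsBigO.fun_sum
  intro i hi
  rw [Finset.mem_range] at hi
  exact (choose_PA i).isBigO.trans (zpow_isBigO_zpow (by omega))

lemma sum_choose_pred_isBigO (m : ℕ) :
    (fun n : ℕ => ∑ i ∈ Finset.range m, ((n-1).choose i : ℝ)) =O[atTop]
      fun n : ℕ => (n:ℝ)^((m:ℤ)-1) := by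
  apply IsBigO.fun_sum
  intro i hi
  rw [Finset.mem_range] at hi
  exact (choose_pred_isBigO i).trans (zpow_isBigO_zpow (by omega))

lemma sum_choose_PA (m : ℕ) :
    PA (1/(m.factorial:ℝ)) (m:ℤ) (fun n => ∑ i ∈ Finset.range (m+1), (n.choose i : ℝ)) := by
  have h1 := choose_PA m
  have h2 := sum_choose_isBigO m
  have h3 := h1.add_isBigO h2
  apply h3.congr rfl rfl
  intro n; rw [Finset.sum_range_succ]; ring

lemma sum_choose_pred_PA (m : ℕ) :
    PA (1/(m.factorial:ℝ)) (m:ℤ) (fun n => ∑ i ∈ Finset.range (m+1), ((n-1).choose i : ℝ)) := by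
  have h1 := choose_pred_PA m
  have h2 := sum_choose_pred_isBigO m
  have h3 := h1.add_isBigO h2
  apply h3.congr rfl rfl
  intro n; rw [Finset.sum_range_succ]; ring

lemma isBigO_mul_zpow {a b : ℤ} {f g : ℕ → ℝ} (hf : f =O[atTop] fun n : ℕ => (n:ℝ)^a)
    (hg : g =O[atTop] fun n : ℕ => (n:ℝ)^b) :
    (fun n => f n * g n) =O[atTop] fun n : ℕ => (n:ℝ)^(a+b) :=
  (hf.mul hg).trans (mul_zpow_ev a b).isBigO

lemma two_n_PA : PA 2 1 (fun n : ℕ => 2 * (n:ℝ)) := by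
  unfold PA
  apply (isBigO_zero _ _).congr_left
  intro n; rw [zpow_one]; ring

/-- let `f n L` be the total face count bound defined recursively by
`f n 1 = 2n·∑_{i=0}^{d-1} C(n-1,i) + 2d·∑_{i=0}^{d-1} C(n,i)` and, for `L ≥ 2`,
`f n L = 2n·∑_{i=0}^{d-1} C(n-1,i)·r(L-1) + ∑_{i=0}^{d-1} C(n,i)·f n (L-1)` where
`r(L-1) = (∑_{j=0}^{d} C(n,j))^{L-1}` (the product over `L-1` equal-width layers).
Then for fixed `d` and `L`, `f n L = (2/((d-1)!(d!)^{L-1}))·n^{dL} + O(n^{dL-1})`. -/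
theorem stmt_15 (d L : ℕ) (hd : 1 ≤ d) (hL : 1 ≤ L) (f : ℕ → ℕ → ℝ)
    (hf1 : ∀ n, f n 1 = 2 * (n : ℝ) * ∑ i ∈ Finset.range d, ((n - 1).choose i : ℝ)
      + 2 * (d : ℝ) * ∑ i ∈ Finset.range d, (n.choose i : ℝ))
    (hfrec : ∀ n M, 2 ≤ M → f n M =
      2 * (n : ℝ) * (∑ i ∈ Finset.range d, ((n - 1).choose i : ℝ))
          * (∑ j ∈ Finset.range (d + 1), (n.choose j : ℝ)) ^ (M - 1)
        + (∑ i ∈ Finset.range d, (n.choose i : ℝ)) * f n (M - 1)) :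
    (fun n : ℕ => f n L -
        2 / (((d - 1).factorial : ℝ) * (d.factorial : ℝ) ^ (L - 1)) * (n : ℝ) ^ (d * L))
      =O[Filter.atTop] fun n : ℕ => (n : ℝ) ^ (d * L - 1) := by
  obtain ⟨m, rfl⟩ : ∃ m, d = m + 1 := ⟨d - 1, by omega⟩
  have main : ∀ M, 1 ≤ M →
      PA (2/((m.factorial:ℝ) * (((m+1).factorial:ℝ))^(M-1))) (((m+1)*M : ℕ):ℤ)
        (fun n => f n M) := by
    intro M
    induction M with
    | zero => omega
    | succ M ih =>
      intro _
      rcases Nat.eq_zero_or_pos M with rfl | hM1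
      · -- base case M+1 = 1
        have hB := sum_choose_pred_PA m
        have hT1 := two_n_PA.mul hB
        have hA := sum_choose_isBigO (m+1)
        have hA' : (fun n : ℕ =>
            2 * (((m+1):ℕ):ℝ) * ∑ i ∈ Finset.range (m+1), (n.choose i : ℝ)) =O[atTop]
            fun n : ℕ => (n:ℝ)^((1+(m:ℤ))-1) :=
          (hA.const_mul_left _).trans (zpow_isBigO_zpow (le_of_eq (by push_cast; ring)))
        have h := hT1.add_isBigO hA'
        apply h.congr ?_ ?_ ?_
        · simp only [Nat.add_sub_cancel, pow_zero, mul_one]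
          ring
        · push_cast; ring
        · intro n
          show _ = f n 1
          rw [hf1 n]
      · -- inductive step
        have ih' := ih (by omega)
        have hB := sum_choose_pred_PA m
        have hP := sum_choose_PA (m+1)
        have hPow := hP.pow M
        have hT1 := (two_n_PA.mul hB).mul hPow
        have hA := sum_choose_isBigO (m+1)
        have hT2 := isBigO_mul_zpow hA ih'.isBigO
        have hT2' := hT2.trans (zpow_isBigO_zpow
          (le_of_eq (show ((((m+1):ℕ):ℤ)-1) + (((m+1)*M : ℕ):ℤ)
            = ((1 + (m:ℤ)) + ((m+1:ℕ):ℤ) * (M:ℤ)) - 1 by push_cast; ring)))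
        have h := hT1.add_isBigO hT2'
        apply h.congr ?_ ?_ ?_
        · have ha : (m.factorial:ℝ) ≠ 0 := Nat.cast_ne_zero.mpr m.factorial_ne_zero
          have hb : (((m+1).factorial:ℝ)) ≠ 0 := Nat.cast_ne_zero.mpr (m+1).factorial_ne_zero
          rw [Nat.add_sub_cancel]
          field_simp
          rw [← mul_pow, one_div, inv_mul_cancel₀ hb, one_pow]
        · push_cast; ring
        · intro n
          show _ = f n (M+1)
          rw [hfrec n (M+1) (by omega)]
          simp only [Nat.add_sub_cancel]
  have H := main L hL
  have hml : 1 ≤ (m+1)*L := by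
    calc 1 = 1*1 := by ring
    _ ≤ (m+1)*L := Nat.mul_le_mul (by omega) hL
  simp only [Nat.add_sub_cancel]
  unfold PA at H
  apply H.congr
  · intro n
    rw [zpow_natCast]
  · intro n
    rw [show ((((m+1)*L : ℕ):ℤ)) - 1 = (((m+1)*L - 1 : ℕ):ℤ) by
        rw [Nat.cast_sub hml]; simp, zpow_natCast]
end

section
/- For fixed integers d ≥ 1 and d_0 with 1 ≤ d_0 ≤ d, as n → ∞ the ratio (2n·sum_{i=0}^{d_0-1} binom(n-1, i) + 2d·sum_{i=0}^{d_0-1} binom(n, i)) / (sum_{i=0}^{d_0} binom(n, i)) is at most 2d_0 + 2d·d_0/(n - d_0 + 1); in particular for all sufficiently large n it is at most 2d_0 + 1. -/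
/-- Average facet count per linear region for a one-hidden-layer ReLU network with `d`
inputs and `n` hidden neurons whose weight matrix has rank `d₀`. -/
noncomputable def avgFacesLowRank (d d₀ n : ℕ) : ℝ :=
  (2 * (n : ℝ) * ∑ i ∈ Finset.range d₀, ((n - 1).choose i : ℝ) +
      2 * (d : ℝ) * ∑ i ∈ Finset.range d₀, (n.choose i : ℝ)) /
    (∑ i ∈ Finset.range (d₀ + 1), (n.choose i : ℝ))

lemma natA (d₀ n : ℕ) (hd₀ : 1 ≤ d₀) (hn : d₀ ≤ n) :
    ∑ i ∈ Finset.range d₀, n * (n - 1).choose i ≤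
      d₀ * ∑ i ∈ Finset.range (d₀ + 1), n.choose i := by
  have h1 : 1 ≤ n := le_trans hd₀ hn
  calc ∑ i ∈ Finset.range d₀, n * (n - 1).choose i
      ≤ ∑ i ∈ Finset.range d₀, d₀ * n.choose (i + 1) := by
        apply Finset.sum_le_sum
        intro i hi
        have hi' : i + 1 ≤ d₀ := Finset.mem_range.mp hi
        obtain ⟨m, rfl⟩ : ∃ m, n = m + 1 := ⟨n - 1, by omega⟩
        have key : (m + 1) * (m + 1 - 1).choose i = (m + 1).choose (i + 1) * (i + 1) := by
          simpa using Nat.add_one_mul_choose_eq m i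
        rw [key] at *
        calc (m + 1).choose (i + 1) * (i + 1) = (i + 1) * (m + 1).choose (i + 1) := by ring
          _ ≤ d₀ * (m + 1).choose (i + 1) := Nat.mul_le_mul_right _ hi'
    _ = d₀ * ∑ i ∈ Finset.range d₀, n.choose (i + 1) := by rw [Finset.mul_sum]
    _ ≤ d₀ * ∑ i ∈ Finset.range (d₀ + 1), n.choose i := by
        apply Nat.mul_le_mul_left
        rw [Finset.sum_range_succ' (fun i => n.choose i) d₀]
        omega

lemma natB (d₀ n : ℕ) (hd₀ : 1 ≤ d₀) (hn : d₀ ≤ n) :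
    (n - d₀ + 1) * ∑ i ∈ Finset.range d₀, n.choose i ≤
      d₀ * ∑ i ∈ Finset.range (d₀ + 1), n.choose i := by
  calc (n - d₀ + 1) * ∑ i ∈ Finset.range d₀, n.choose i
      = ∑ i ∈ Finset.range d₀, (n - d₀ + 1) * n.choose i := by rw [Finset.mul_sum]
    _ ≤ ∑ i ∈ Finset.range d₀, d₀ * n.choose (i + 1) := by
        apply Finset.sum_le_sum
        intro i hi
        have hi' : i + 1 ≤ d₀ := Finset.mem_range.mp hi
        have key : n.choose (i + 1) * (i + 1) = n.choose i * (n - i) :=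
          Nat.choose_succ_right_eq n i
        calc (n - d₀ + 1) * n.choose i ≤ (n - i) * n.choose i := by
              apply Nat.mul_le_mul_right; omega
          _ = (i + 1) * n.choose (i + 1) := by rw [Nat.mul_comm, ← key]; ring
          _ ≤ d₀ * n.choose (i + 1) := Nat.mul_le_mul_right _ hi'
    _ = d₀ * ∑ i ∈ Finset.range d₀, n.choose (i + 1) := by rw [Finset.mul_sum]
    _ ≤ d₀ * ∑ i ∈ Finset.range (d₀ + 1), n.choose i := by
        apply Nat.mul_le_mul_left
        rw [Finset.sum_range_succ' (fun i => n.choose i) d₀]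
        omega

lemma main_bound (d d₀ n : ℕ) (hd₀ : 1 ≤ d₀) (hn : d₀ ≤ n) :
    avgFacesLowRank d d₀ n ≤
      2 * (d₀ : ℝ) + 2 * (d : ℝ) * (d₀ : ℝ) / ((n : ℝ) - (d₀ : ℝ) + 1) := by
  set D : ℝ := ∑ i ∈ Finset.range (d₀ + 1), (n.choose i : ℝ) with hD
  have hDpos : 0 < D := by
    apply Finset.sum_pos
    · intro i hi
      have : 0 < n.choose i := Nat.choose_pos (by
        have := Finset.mem_range.mp hi; omega)
      exact_mod_cast this
    · exact ⟨0, Finset.mem_range.mpr (by omega)⟩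
  have hm : (0 : ℝ) < (n : ℝ) - (d₀ : ℝ) + 1 := by
    have : (d₀ : ℝ) ≤ (n : ℝ) := by exact_mod_cast hn
    linarith
  rw [avgFacesLowRank, div_le_iff₀ hDpos]
  -- cast the ℕ lemmas
  have hA : (n : ℝ) * ∑ i ∈ Finset.range d₀, ((n - 1).choose i : ℝ) ≤ (d₀ : ℝ) * D := by
    have := natA d₀ n hd₀ hn
    have := (Nat.cast_le (α := ℝ)).mpr this
    push_cast at this
    rw [hD]; push_cast
    rw [Finset.mul_sum]
    linarith
  have hB : ((n : ℝ) - (d₀ : ℝ) + 1) * ∑ i ∈ Finset.range d₀, (n.choose i : ℝ) ≤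
      (d₀ : ℝ) * D := by
    have := natB d₀ n hd₀ hn
    have := (Nat.cast_le (α := ℝ)).mpr this
    push_cast [Nat.cast_sub hn] at this
    rw [hD]; push_cast
    linarith
  have hd_nonneg : (0 : ℝ) ≤ (d : ℝ) := Nat.cast_nonneg d
  have hS2 : ∑ i ∈ Finset.range d₀, (n.choose i : ℝ) ≤
      (d₀ : ℝ) * D / ((n : ℝ) - (d₀ : ℝ) + 1) := by
    rw [le_div_iff₀ hm]; linarith
  have h2 : 2 * (d : ℝ) * ∑ i ∈ Finset.range d₀, (n.choose i : ℝ) ≤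
      2 * (d : ℝ) * ((d₀ : ℝ) * D / ((n : ℝ) - (d₀ : ℝ) + 1)) := by
    apply mul_le_mul_of_nonneg_left hS2; linarith
  have heq : (2 * (d₀ : ℝ) + 2 * (d : ℝ) * (d₀ : ℝ) / ((n : ℝ) - (d₀ : ℝ) + 1)) * D =
      2 * ((d₀ : ℝ) * D) + 2 * (d : ℝ) * ((d₀ : ℝ) * D / ((n : ℝ) - (d₀ : ℝ) + 1)) := by
    field_simp
  rw [heq]
  linarith

/-- for fixed `d ≥ 1` and `1 ≤ d₀ ≤ d`, as `n → ∞` the ratio is at most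
`2d₀ + 2d·d₀/(n - d₀ + 1)`; in particular it is at most `2d₀ + 1` for all
sufficiently large `n`. -/
theorem stmt_17 (d d₀ : ℕ) (hd₀ : 1 ≤ d₀) (hd : d₀ ≤ d) :
    (∀ᶠ n : ℕ in Filter.atTop,
      avgFacesLowRank d d₀ n ≤
        2 * (d₀ : ℝ) + 2 * (d : ℝ) * (d₀ : ℝ) / ((n : ℝ) - (d₀ : ℝ) + 1)) ∧
    ∀ᶠ n : ℕ in Filter.atTop, avgFacesLowRank d d₀ n ≤ 2 * (d₀ : ℝ) + 1 := by
  constructor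
  · filter_upwards [Filter.eventually_ge_atTop d₀] with n hn
    exact main_bound d d₀ n hd₀ hn
  · filter_upwards [Filter.eventually_ge_atTop (2 * d * d₀ + d₀)] with n hn
    have hn' : d₀ ≤ n := by omega
    have h1 := main_bound d d₀ n hd₀ hn'
    have hm : (0 : ℝ) < (n : ℝ) - (d₀ : ℝ) + 1 := by
      have : (d₀ : ℝ) ≤ (n : ℝ) := by exact_mod_cast hn'
      linarith
    have h2 : 2 * (d : ℝ) * (d₀ : ℝ) / ((n : ℝ) - (d₀ : ℝ) + 1) ≤ 1 := by
      rw [div_le_one hm]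
      have : ((2 * d * d₀ + d₀ : ℕ) : ℝ) ≤ (n : ℝ) := by exact_mod_cast hn
      push_cast at this
      linarith
    linarith
end
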